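/- A vector x ∈ ℝⁿ is the mean score sequence of a random Coxeter tournament of type Bₙ on the complete signed graph if and only if |x| = (|x₁|,…,|xₙ|) is weakly sub-majorized by ρ = (1/2, 3/2, …, n - 1/2). -/

import Mathlib

open Finset

/-- `u` is weakly sub-majorized by `v`. -/
def WeakSubMaj {α β : Type*} [Fintype α] [Fintype β] (u : α → ℝ) (v : β → ℝ) : Prop :=
  ∀ S : Finset α, ∃ T : Finset β, T.card = S.card ∧ ∑ i ∈ S, u i ≤ ∑ j ∈ T, v j

/-- `x` is the mean score sequence of a random Coxeter tournament of type `Bₙ`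
on the complete signed graph on `n` vertices. -/
def IsMeanScoreSeqB (n : ℕ) (x : Fin n → ℝ) : Prop :=
  ∃ (pm pp : Fin n → Fin n → ℝ) (ph : Fin n → ℝ),
    (∀ i j, 0 ≤ pm i j ∧ pm i j ≤ 1) ∧
    (∀ i j, i ≠ j → pm i j = 1 - pm j i) ∧
    (∀ i j, 0 ≤ pp i j ∧ pp i j ≤ 1) ∧
    (∀ i j, pp i j = pp j i) ∧
    (∀ i, 0 ≤ ph i ∧ ph i ≤ 1) ∧
    (∀ i, x i = ∑ j ∈ univ.erase i, (pm i j - 1/2)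
              + ∑ j ∈ univ.erase i, (pp i j - 1/2)
              + (ph i - 1/2))


/-- The bound `k(2N-k)/2`. -/
noncomputable def FB (N k : ℕ) : ℝ := (k : ℝ) * (2 * N - k) / 2

lemma FB_succ_sub (n k : ℕ) : FB (n+1) k - k = FB n k := by
  unfold FB; push_cast; ring

lemma FB_succ_succ_sub (n k : ℕ) : FB (n+1) (k+1) - FB (n+1) 1 = FB n k := by
  unfold FB; push_cast; ring

lemma FB_mono (n : ℕ) {p k : ℕ} (hpk : p ≤ k) (hk : k ≤ n) : FB n p ≤ FB n k := by
  unfold FB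
  have h1 : (p:ℝ) ≤ k := by exact_mod_cast hpk
  have h2 : (k:ℝ) ≤ n := by exact_mod_cast hk
  nlinarith

lemma FB_diff (n p k : ℕ) :
    FB n k - FB n p = ((k:ℝ) - p) * ((n:ℝ) - ((p:ℝ)+k)/2) := by
  unfold FB; ring


lemma FB_one (n : ℕ) : FB (n+1) 1 = (n : ℝ) + 1/2 := by unfold FB; push_cast; ring

/-- extend a `Fin n`-tuple by zero. -/
noncomputable def zext (n : ℕ) (z : Fin n → ℝ) : ℕ → ℝ :=
  fun j => if h : j < n then z ⟨j, h⟩ else 0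

lemma zext_lt {n : ℕ} (z : Fin n → ℝ) {j : ℕ} (h : j < n) : zext n z j = z ⟨j, h⟩ := dif_pos h

lemma zext_ge {n : ℕ} (z : Fin n → ℝ) {j : ℕ} (h : n ≤ j) : zext n z j = 0 := dif_neg (by omega)

lemma zext_antitone {n : ℕ} {z : Fin n → ℝ} (hz : Antitone z) (hz0 : ∀ i, 0 ≤ z i) :
    Antitone (zext n z) := by
  intro i j hij
  unfold zext
  by_cases hj : j < n
  · have hi : i < n := lt_of_le_of_lt hij hj
    rw [dif_pos hi, dif_pos hj]
    exact hz (by exact_mod_cast hij : (⟨i, hi⟩ : Fin n) ≤ ⟨j, hj⟩)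
  · rw [dif_neg hj]
    by_cases hi : i < n
    · rw [dif_pos hi]; exact hz0 _
    · rw [dif_neg hi]

lemma zext_nonneg {n : ℕ} {z : Fin n → ℝ} (hz0 : ∀ i, 0 ≤ z i) (j : ℕ) : 0 ≤ zext n z j := by
  unfold zext; split
  · exact hz0 _
  · exact le_rfl

/-- prefix sums of extended tuple equal sums over Fin-subsets given by val < k. -/
lemma sum_zext_prefix {n : ℕ} (z : Fin n → ℝ) {k : ℕ} (hk : k ≤ n) :
    ∑ j ∈ range k, zext n z j = ∑ i ∈ univ.filter (fun i : Fin n => (i : ℕ) < k), z i := by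
  rw [Finset.sum_filter]
  have h1 : ∀ i : Fin n, (if (i : ℕ) < k then z i else 0)
      = (fun j : ℕ => if j < k then zext n z j else 0) (i : ℕ) := by
    intro i
    simp only [zext_lt z i.isLt]
  calc ∑ j ∈ range k, zext n z j
      = ∑ j ∈ range n, (fun j : ℕ => if j < k then zext n z j else 0) j := by
        rw [← Finset.sum_filter]
        congr 1
        ext j
        simp only [mem_filter, mem_range]
        omega
    _ = ∑ i : Fin n, (if (i : ℕ) < k then z i else 0) := by
        rw [← Fin.sum_univ_eq_sum_range]
        exact Finset.sum_congr rfl fun i _ => (h1 i).symm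

lemma strictMono_fin_nat_le {k : ℕ} {f : Fin k → ℕ} (hf : StrictMono f) :
    ∀ i : Fin k, (i : ℕ) ≤ f i := by
  intro i
  obtain ⟨v, hv⟩ := i
  induction v with
  | zero => exact Nat.zero_le _
  | succ m ih =>
    have hm : m < k := by omega
    have h1 : m ≤ f ⟨m, hm⟩ := by simpa using ih hm
    have h2 : f ⟨m, hm⟩ < f ⟨m+1, hv⟩ := hf (by simp [Fin.lt_def])
    show m + 1 ≤ f ⟨m+1, hv⟩
    omega

/-- helper: a finset image description -/
lemma image_eq_of_range {n k : ℕ} (S : Finset (Fin n)) (f : Fin k → Fin n)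
    (hf : Function.Injective f) (hmem : ∀ i, f i ∈ S) (hcard : S.card = k) :
    Finset.image f univ = S := by
  apply Finset.eq_of_subset_of_card_le
  · intro a ha
    obtain ⟨i, _, rfl⟩ := Finset.mem_image.1 ha
    exact hmem i
  · rw [hcard, Finset.card_image_of_injective _ hf, card_univ, Fintype.card_fin]

/-- sum over any subset is at most the prefix sum, for antitone tuples -/
lemma sum_subset_le_prefix {n : ℕ} {z : Fin n → ℝ} (hz : Antitone z)
    (S : Finset (Fin n)) :
    ∑ i ∈ S, z i ≤ ∑ j ∈ range S.card, zext n z j := by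
  classical
  have hk : S.card ≤ n := by
    simpa using Finset.card_le_card (Finset.subset_univ S)
  set k := S.card with hkdef
  set e := S.orderEmbOfFin rfl with he
  have hmono : StrictMono (fun i : Fin k => ((e i : Fin n) : ℕ)) := by
    intro a b hab
    exact_mod_cast (OrderEmbedding.lt_iff_lt e).2 hab
  have hle : ∀ i : Fin k, (i : ℕ) ≤ ((e i : Fin n) : ℕ) := strictMono_fin_nat_le hmono
  have himg := image_eq_of_range S (fun i => e i) e.injective
    (fun i => S.orderEmbOfFin_mem rfl i) rfl
  have h1 : ∑ i ∈ S, z i = ∑ i : Fin k, z (e i) := by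
    have hsi := Finset.sum_image (s := univ) (g := fun i : Fin k => e i) (f := z)
      (fun a _ b _ h => e.injective h)
    rw [himg] at hsi
    simpa using hsi
  have h2 : ∑ j ∈ range k, zext n z j = ∑ i : Fin k, zext n z (i : ℕ) :=
    (Fin.sum_univ_eq_sum_range (fun j => zext n z j) k).symm
  rw [h1, h2]
  apply Finset.sum_le_sum
  intro i _
  have hlt : (i : ℕ) < n := lt_of_lt_of_le i.isLt hk
  rw [zext_lt z hlt]
  exact hz (by exact_mod_cast hle i : (⟨(i:ℕ), hlt⟩ : Fin n) ≤ e i)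

/-- The key water-filling estimate. -/
lemma waterfill_key (n : ℕ) (w : ℕ → ℝ) (z0 c : ℝ)
    (hw_anti : Antitone w) (hw_nonneg : ∀ j, 0 ≤ w j) (hw_zero : w n = 0)
    (hc : 0 ≤ c)
    (hH1 : ∀ k, k ≤ n → ∑ j ∈ range k, w j ≤ FB (n+1) k)
    (hH2 : ∀ k, k ≤ n → z0 + ∑ j ∈ range k, w j ≤ FB (n+1) (k+1))
    (hD : ∑ j ∈ range n, (min 1 (max 0 (w j - c))) ≤ (n:ℝ) + 1/2 - z0)
    (hcase : c = 0 ∨ ∑ j ∈ range n, (min 1 (max 0 (w j - c))) = (n:ℝ) + 1/2 - z0) :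
    ∀ k, k ≤ n → ∑ j ∈ range k, (w j - min 1 (max 0 (w j - c))) ≤ FB n k := by
  classical
  set b : ℕ → ℝ := fun j => min 1 (max 0 (w j - c)) with hbdef
  set M : ℝ := (n : ℝ) + 1/2 - z0 with hMdef
  -- basic b facts
  have hb_eq1 : ∀ j, c + 1 ≤ w j → b j = 1 := by
    intro j hj
    have h1 : (1:ℝ) ≤ max 0 (w j - c) := le_max_of_le_right (by linarith)
    simp [hbdef, min_eq_left h1]
  have hb_mid : ∀ j, c ≤ w j → w j ≤ c + 1 → b j = w j - c := by
    intro j h1 h2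
    have h3 : max 0 (w j - c) = w j - c := max_eq_right (by linarith)
    rw [hbdef]; simp only [h3]; exact min_eq_right (by linarith)
  have hb_eq0 : ∀ j, w j ≤ c → b j = 0 := by
    intro j hj
    have h3 : max 0 (w j - c) = 0 := max_eq_left (by linarith)
    simp [hbdef, h3]
  have hb_nonneg : ∀ j, 0 ≤ b j := by
    intro j
    rw [hbdef]
    exact le_min (by norm_num) (le_max_left 0 _)
  have hb_le_one : ∀ j, b j ≤ 1 := fun j => min_le_left _ _
  clear_value b M
  -- the "all ones" prefix computation
  have main : ∀ k, k ≤ n → ∑ j ∈ range k, (w j - b j) ≤ FB n k := by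
    intro k hk
    -- p = first index where w < c + 1
    have hexp : ∃ i, w i < c + 1 := ⟨n, by rw [hw_zero]; linarith⟩
    set p := Nat.find hexp with hpdef
    have hp_le : p ≤ n := Nat.find_le (by rw [hw_zero]; linarith)
    have hbig : ∀ j, j < p → c + 1 ≤ w j := fun j hj => not_lt.1 (Nat.find_min hexp hj)
    have hsmallp : ∀ j, p ≤ j → w j < c + 1 :=
      fun j hj => lt_of_le_of_lt (hw_anti hj) (Nat.find_spec hexp)
    -- case k ≤ p : all b = 1 on range k
    rcases le_or_gt k p with hkp | hpk
    · have hsum : ∑ j ∈ range k, (w j - b j) = (∑ j ∈ range k, w j) - k := by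
        rw [Finset.sum_sub_distrib]
        congr 1
        rw [Finset.sum_congr rfl (fun j hj => hb_eq1 j (hbig j (lt_of_lt_of_le (mem_range.1 hj) hkp)))]
        simp
      rw [hsum, ← FB_succ_sub n k]
      have := hH1 k hk
      linarith
    · -- p < k
      have hsplit : ∑ j ∈ range k, (w j - b j)
          = (∑ j ∈ range p, (w j - b j)) + ∑ j ∈ Ico p k, (w j - b j) := by
        rw [Finset.range_eq_Ico, ← Finset.sum_Ico_consecutive _ (Nat.zero_le p) (le_of_lt hpk),
          ← Finset.range_eq_Ico]
      have hfirst : ∑ j ∈ range p, (w j - b j) = (∑ j ∈ range p, w j) - p := by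
        rw [Finset.sum_sub_distrib]
        congr 1
        rw [Finset.sum_congr rfl (fun j hj => hb_eq1 j (hbig j (mem_range.1 hj)))]
        simp
      have hWp := hH1 p hp_le
      rcases hcase with hc0 | hgM
      · -- Branch I : c = 0, so b j = w j for j ≥ p
        subst hc0
        have hmid : ∀ j, p ≤ j → w j - b j = 0 := by
          intro j hj
          rw [hb_mid j (hw_nonneg j) (le_of_lt (hsmallp j hj))]
          ring
        have hsecond : ∑ j ∈ Ico p k, (w j - b j) = 0 :=
          Finset.sum_eq_zero (fun j hj => hmid j (mem_Ico.1 hj).1)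
        rw [hsplit, hfirst, hsecond, add_zero]
        have h1 : (∑ j ∈ range p, w j) - p ≤ FB n p := by
          rw [← FB_succ_sub n p]; linarith
        exact le_trans h1 (FB_mono n (le_of_lt hpk) hk)
      · -- Branch II : total = M
        -- q = first index where w < c
        by_cases hcpos : c = 0
        · -- same as Branch I
          subst hcpos
          have hmid : ∀ j, p ≤ j → w j - b j = 0 := by
            intro j hj
            rw [hb_mid j (hw_nonneg j) (le_of_lt (hsmallp j hj))]
            ring
          have hsecond : ∑ j ∈ Ico p k, (w j - b j) = 0 :=
            Finset.sum_eq_zero (fun j hj => hmid j (mem_Ico.1 hj).1)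
          rw [hsplit, hfirst, hsecond, add_zero]
          have h1 : (∑ j ∈ range p, w j) - p ≤ FB n p := by
            rw [← FB_succ_sub n p]; linarith
          exact le_trans h1 (FB_mono n (le_of_lt hpk) hk)
        · have hcpos' : 0 < c := lt_of_le_of_ne hc (Ne.symm hcpos)
          have hexq : ∃ i, w i < c := ⟨n, by rw [hw_zero]; linarith⟩
          set q := Nat.find hexq with hqdef
          have hq_le : q ≤ n := Nat.find_le (by rw [hw_zero]; linarith)
          have hbigq : ∀ j, j < q → c ≤ w j := fun j hj => not_lt.1 (Nat.find_min hexq hj)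
          have hsmallq : ∀ j, q ≤ j → w j < c :=
            fun j hj => lt_of_le_of_lt (hw_anti hj) (Nat.find_spec hexq)
          have hpq : p ≤ q := by
            by_contra hcon
            push_neg at hcon
            exact absurd (hbig q hcon) (by have := Nat.find_spec hexq; linarith)
          have hb_zero_ge : ∀ j, q ≤ j → b j = 0 :=
            fun j hj => hb_eq0 j (le_of_lt (hsmallq j hj))
          have hb_mid' : ∀ j, p ≤ j → j < q → b j = w j - c := by
            intro j h1 h2
            exact hb_mid j (hbigq j h2) (le_of_lt (hsmallp j h1))
          rcases le_or_gt q k with hqk | hkq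
          · -- Case C : q ≤ k; all budget is inside range k
            have hBk : ∑ j ∈ range k, b j = ∑ j ∈ range n, b j := by
              rw [Finset.range_eq_Ico, Finset.range_eq_Ico, ← Finset.sum_Ico_consecutive _ (Nat.zero_le k) hk,
                ← Finset.range_eq_Ico]
              have : ∑ j ∈ Ico k n, b j = 0 :=
                Finset.sum_eq_zero (fun j hj => hb_zero_ge j (le_trans hqk (mem_Ico.1 hj).1))
              rw [this, add_zero]
            rw [Finset.sum_sub_distrib, hBk, hgM]
            have h2 := hH2 k hk
            have h3 : FB (n+1) (k+1) - FB (n+1) 1 = FB n k := FB_succ_succ_sub n k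
            rw [FB_one] at h3
            linarith
          · -- Case B : p < k < q
            have hθ : ∀ j, p ≤ j → j < k → w j - b j = c := by
              intro j h1 h2
              rw [hb_mid' j h1 (lt_trans h2 hkq)]; ring
            have hsecond : ∑ j ∈ Ico p k, (w j - b j) = ((k:ℝ) - p) * c := by
              rw [Finset.sum_congr rfl (fun j hj => hθ j (mem_Ico.1 hj).1 (mem_Ico.1 hj).2)]
              rw [Finset.sum_const, Nat.card_Ico, nsmul_eq_mul, Nat.cast_sub (le_of_lt hpk)]
            rw [hsplit, hfirst, hsecond]
            rcases le_or_gt c ((n:ℝ) - ((p:ℝ)+k)/2) with hcth | hthc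
            · -- B1 : c small
              have hkp' : (0:ℝ) ≤ (k:ℝ) - p := by
                have : (p:ℝ) ≤ k := by exact_mod_cast le_of_lt hpk
                linarith
              have h1 : ((k:ℝ) - p) * c ≤ ((k:ℝ) - p) * ((n:ℝ) - ((p:ℝ)+k)/2) :=
                mul_le_mul_of_nonneg_left hcth hkp'
              have h2 : FB n k - FB n p = ((k:ℝ) - p) * ((n:ℝ) - ((p:ℝ)+k)/2) := FB_diff n p k
              have h3 : (∑ j ∈ range p, w j) - p ≤ FB n p := by
                rw [← FB_succ_sub n p]; linarith
              linarith
            · -- B2 : c large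
              -- rewrite the sum as W q - M - (q-k) c
              have hq_eq : (∑ j ∈ range p, w j) - p + ((k:ℝ) - p) * c
                  = (∑ j ∈ range q, w j) - M - ((q:ℝ) - k) * c := by
                -- uses hgM : total budget = M
                have hsplitb : ∑ j ∈ range n, b j
                    = (∑ j ∈ range p, b j) + (∑ j ∈ Ico p q, b j) + ∑ j ∈ Ico q n, b j := by
                  rw [Finset.range_eq_Ico, ← Finset.sum_Ico_consecutive _ (Nat.zero_le q) hq_le,
                    ← Finset.sum_Ico_consecutive _ (Nat.zero_le p) hpq, ← Finset.range_eq_Ico]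
                have hb1 : ∑ j ∈ range p, b j = (p:ℝ) := by
                  rw [Finset.sum_congr rfl (fun j hj => hb_eq1 j (hbig j (mem_range.1 hj)))]
                  simp
                have hb2 : ∑ j ∈ Ico p q, b j = (∑ j ∈ Ico p q, w j) - ((q:ℝ) - p) * c := by
                  rw [Finset.sum_congr rfl (fun j hj => hb_mid' j (mem_Ico.1 hj).1 (mem_Ico.1 hj).2)]
                  rw [Finset.sum_sub_distrib, Finset.sum_const, Nat.card_Ico, nsmul_eq_mul,
                    Nat.cast_sub hpq]
                have hb3 : ∑ j ∈ Ico q n, b j = 0 :=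
                  Finset.sum_eq_zero (fun j hj => hb_zero_ge j (mem_Ico.1 hj).1)
                have hIpq : ∑ j ∈ Ico p q, w j = (∑ j ∈ range q, w j) - ∑ j ∈ range p, w j :=
                  Finset.sum_Ico_eq_sub w hpq
                rw [hsplitb, hb1, hb2, hb3, hIpq] at hgM
                have hkc : ((q:ℝ) - p) = ((q:ℝ) - k) + ((k:ℝ) - p) := by ring
                linarith [hgM]
              rw [hq_eq]
              have hWq := hH2 q hq_le
              have hqk' : (0:ℝ) ≤ (q:ℝ) - k := by
                have : (k:ℝ) ≤ q := by exact_mod_cast le_of_lt hkq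
                linarith
              have hθ' : (n:ℝ) - ((q:ℝ)+k)/2 ≤ c := by
                have hpq' : (p:ℝ) ≤ q := by exact_mod_cast hpq
                linarith
              have h1 : ((q:ℝ) - k) * ((n:ℝ) - ((q:ℝ)+k)/2) ≤ ((q:ℝ) - k) * c :=
                mul_le_mul_of_nonneg_left hθ' hqk'
              have h2 : FB n q - FB n k = ((q:ℝ) - k) * ((n:ℝ) - ((k:ℝ)+q)/2) := FB_diff n k q
              have h3 : FB (n+1) (q+1) - FB (n+1) 1 = FB n q := FB_succ_succ_sub n q
              rw [FB_one] at h3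
              have h4 : ((n:ℝ) - ((q:ℝ)+k)/2) = ((n:ℝ) - ((k:ℝ)+q)/2) := by ring
              rw [h4] at h1
              linarith
  simp only [hbdef] at main
  exact main



lemma IsMeanScoreSeqB.perm {n : ℕ} {x : Fin n → ℝ} (h : IsMeanScoreSeqB n x)
    (σ : Equiv.Perm (Fin n)) : IsMeanScoreSeqB n (x ∘ σ) := by
  obtain ⟨pm, pp, ph, h1, h2, h3, h4, h5, h6⟩ := h
  refine ⟨fun i j => pm (σ i) (σ j), fun i j => pp (σ i) (σ j), fun i => ph (σ i),
    fun i j => h1 _ _, fun i j hij => h2 _ _ (fun hc => hij (σ.injective hc)),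
    fun i j => h3 _ _, fun i j => h4 _ _, fun i => h5 _, fun i => ?_⟩
  show x (σ i) = ∑ j ∈ univ.erase i, (pm (σ i) (σ j) - 1/2)
      + ∑ j ∈ univ.erase i, (pp (σ i) (σ j) - 1/2) + (ph (σ i) - 1/2)
  have hx := h6 (σ i)
  rw [Finset.sum_erase_eq_sub (mem_univ (σ i)), Finset.sum_erase_eq_sub (mem_univ (σ i))] at hx
  rw [Finset.sum_erase_eq_sub (mem_univ i), Finset.sum_erase_eq_sub (mem_univ i)]
  have e1 : ∑ j : Fin n, (pm (σ i) (σ j) - 1/2) = ∑ j : Fin n, (pm (σ i) j - 1/2) :=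
    Equiv.sum_comp σ (fun j => pm (σ i) j - 1/2)
  have e2 : ∑ j : Fin n, (pp (σ i) (σ j) - 1/2) = ∑ j : Fin n, (pp (σ i) j - 1/2) :=
    Equiv.sum_comp σ (fun j => pp (σ i) j - 1/2)
  rw [e1, e2]
  linarith [hx]

lemma IsMeanScoreSeqB.signflip {n : ℕ} {x : Fin n → ℝ} (h : IsMeanScoreSeqB n x)
    (s : Fin n → Bool) :
    IsMeanScoreSeqB n (fun i => if s i then -(x i) else x i) := by
  classical
  obtain ⟨pm, pp, ph, h1, h2, h3, h4, h5, h6⟩ := h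
  refine ⟨fun i j => if s i then (if s j then pm j i else 1 - pp i j)
      else (if s j then pp i j else pm i j),
    fun i j => if s i then (if s j then 1 - pp i j else 1 - pm i j)
      else (if s j then pm i j else pp i j),
    fun i => if s i then 1 - ph i else ph i,
    ?_, ?_, ?_, ?_, ?_, ?_⟩
  · intro i j
    rcases Bool.dichotomy (s i) with hi | hi <;> rcases Bool.dichotomy (s j) with hj | hj <;>
      simp only [hi, hj, if_true, if_false, Bool.false_eq_true] <;>
      constructor <;>
      linarith [(h3 i j).1, (h3 i j).2, (h1 i j).1, (h1 i j).2, (h1 j i).1, (h1 j i).2]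
  · intro i j hij
    rcases Bool.dichotomy (s i) with hi | hi <;> rcases Bool.dichotomy (s j) with hj | hj <;>
      simp only [hi, hj, if_true, if_false, Bool.false_eq_true] <;>
      linarith [h4 i j, h2 i j hij, h2 j i (Ne.symm hij)]
  · intro i j
    rcases Bool.dichotomy (s i) with hi | hi <;> rcases Bool.dichotomy (s j) with hj | hj <;>
      simp only [hi, hj, if_true, if_false, Bool.false_eq_true] <;>
      constructor <;>
      linarith [(h3 i j).1, (h3 i j).2, (h1 i j).1, (h1 i j).2, (h1 j i).1, (h1 j i).2]
  · intro i j
    by_cases hij : i = j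
    · subst hij
      rcases Bool.dichotomy (s i) with hi | hi <;>
        simp only [hi, if_true, if_false, Bool.false_eq_true]
    · rcases Bool.dichotomy (s i) with hi | hi <;> rcases Bool.dichotomy (s j) with hj | hj <;>
        simp only [hi, hj, if_true, if_false, Bool.false_eq_true] <;>
        linarith [h4 i j, h2 i j hij, h2 j i (Ne.symm hij)]
  · intro i
    rcases Bool.dichotomy (s i) with hi | hi <;>
      simp only [hi, if_true, if_false, Bool.false_eq_true] <;>
      constructor <;> linarith [(h5 i).1, (h5 i).2]
  · intro i
    have hx := h6 i
    rw [← Finset.sum_add_distrib] at hx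
    rcases Bool.dichotomy (s i) with hi | hi <;>
      simp only [hi, if_true, if_false, Bool.false_eq_true, ← Finset.sum_add_distrib]
    · -- s i = false : score unchanged
      have he : ∑ j ∈ univ.erase i,
          ((if s j then pp i j else pm i j) - 1/2 + ((if s j then pm i j else pp i j) - 1/2))
          = ∑ j ∈ univ.erase i, (pm i j - 1/2 + (pp i j - 1/2)) := by
        refine Finset.sum_congr rfl (fun j hj => ?_)
        rcases Bool.dichotomy (s j) with hsj | hsj <;>
          simp only [hsj, if_true, if_false, Bool.false_eq_true] <;> ring
      rw [he]
      exact hx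
    · -- s i = true : score negated
      have he : ∑ j ∈ univ.erase i,
          ((if s j then pm j i else 1 - pp i j) - 1/2
            + ((if s j then 1 - pp i j else 1 - pm i j) - 1/2))
          = ∑ j ∈ univ.erase i, (-(pm i j - 1/2 + (pp i j - 1/2))) := by
        refine Finset.sum_congr rfl (fun j hj => ?_)
        have hji : j ≠ i := (Finset.mem_erase.1 hj).1
        have h2' := h2 j i hji
        rcases Bool.dichotomy (s j) with hsj | hsj <;>
          simp only [hsj, if_true, if_false, Bool.false_eq_true] <;> linarith
      rw [he, Finset.sum_neg_distrib]
      linarith [hx]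

/-- pointwise identity for the water-filled remainder -/
lemma clamp_sub_eq (x c : ℝ) (hx : 0 ≤ x) : x - min 1 (max 0 (x - c)) = max (x-1) (min x c) := by
  rcases le_total x c with h | h
  · rw [max_eq_left (by linarith : x - c ≤ 0), min_eq_right (by norm_num : (0:ℝ) ≤ 1),
      min_eq_left h, max_eq_right (by linarith : x - 1 ≤ x)]
    ring
  · rw [max_eq_right (by linarith : 0 ≤ x - c)]
    rcases le_total x (c+1) with h2 | h2
    · rw [min_eq_right (by linarith : x - c ≤ 1), min_eq_right h,
        max_eq_right (by linarith : x - 1 ≤ c)]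
      ring
    · rw [min_eq_left (by linarith : 1 ≤ x - c), min_eq_right (by linarith : c ≤ x),
        max_eq_left (by linarith : c ≤ x - 1)]

/-- The central existence result, by induction on `n`. -/
lemma score_aux : ∀ n : ℕ, ∀ z : Fin n → ℝ, Antitone z → (∀ i, 0 ≤ z i) →
    (∀ k, k ≤ n → ∑ j ∈ range k, zext n z j ≤ FB n k) → IsMeanScoreSeqB n z := by
  intro n
  induction n with
  | zero =>
    intro z _ _ _
    exact ⟨fun _ _ => 1/2, fun _ _ => 1/2, fun _ => 1/2,
      fun i => i.elim0, fun i => i.elim0, fun i => i.elim0, fun i => i.elim0,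
      fun i => i.elim0, fun i => i.elim0⟩
  | succ n IH =>
    intro z hz_anti hz_nonneg hz_prefix
    classical
    set z0 : ℝ := z 0 with hz0def
    set w : ℕ → ℝ := fun j => zext (n+1) z (j+1) with hwdef
    set M : ℝ := (n:ℝ) + 1/2 - z0 with hMdef
    have hzext_anti : Antitone (zext (n+1) z) := zext_antitone hz_anti hz_nonneg
    have hzext_nonneg : ∀ j, 0 ≤ zext (n+1) z j := zext_nonneg hz_nonneg
    have hw_anti : Antitone w := fun i j hij => hzext_anti (by omega)
    have hw_nonneg : ∀ j, 0 ≤ w j := fun j => hzext_nonneg (j+1)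
    have hw_zero : w n = 0 := zext_ge z (by omega)
    have hzext0 : zext (n+1) z 0 = z 0 := by
      rw [zext_lt z (Nat.succ_pos n)]
      exact congrArg z (Fin.ext rfl)
    have hz0_le : z0 ≤ (n:ℝ) + 1/2 := by
      have h1 := hz_prefix 1 (by omega)
      rw [Finset.sum_range_one, hzext0, FB_one] at h1
      exact h1
    have hM_nonneg : 0 ≤ M := by rw [hMdef]; linarith
    have hH1 : ∀ k, k ≤ n → ∑ j ∈ range k, w j ≤ FB (n+1) k := by
      intro k hk
      have h1 : ∑ j ∈ range k, w j ≤ ∑ j ∈ range k, zext (n+1) z j :=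
        Finset.sum_le_sum (fun j _ => hzext_anti (by omega))
      exact le_trans h1 (hz_prefix k (by omega))
    have hH2 : ∀ k, k ≤ n → z0 + ∑ j ∈ range k, w j ≤ FB (n+1) (k+1) := by
      intro k hk
      have h1 : ∑ j ∈ range (k+1), zext (n+1) z j = (∑ j ∈ range k, w j) + z0 := by
        rw [Finset.sum_range_succ' (fun j => zext (n+1) z j) k, hzext0]
      have h2 := hz_prefix (k+1) (by omega)
      rw [h1] at h2
      linarith
    -- choose the water level c
    set g : ℝ → ℝ := fun t => ∑ j ∈ range n, min 1 (max 0 (w j - t)) with hgdef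
    have hchoice : ∃ c : ℝ, 0 ≤ c ∧ g c ≤ M ∧ (c = 0 ∨ g c = M) := by
      by_cases hg0 : g 0 ≤ M
      · exact ⟨0, le_refl 0, hg0, Or.inl rfl⟩
      · push_neg at hg0
        have hgcont : Continuous g := by
          apply continuous_finset_sum
          intro j _
          exact continuous_const.min (continuous_const.max (continuous_const.sub continuous_id))
        have hgB : g ((n:ℝ)+1) = 0 := by
          apply Finset.sum_eq_zero
          intro j _
          have hwj : w j ≤ (n:ℝ) + 1/2 := by
            have h1 : w j ≤ zext (n+1) z 0 := hzext_anti (by omega)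
            rw [hzext0] at h1
            exact le_trans h1 hz0_le
          rw [max_eq_left (by linarith), min_eq_right (by norm_num)]
        have hsub : Set.Icc (g ((n:ℝ)+1)) (g 0) ⊆ g '' Set.Icc 0 ((n:ℝ)+1) :=
          intermediate_value_Icc' (by positivity) hgcont.continuousOn
        have hMmem : M ∈ Set.Icc (g ((n:ℝ)+1)) (g 0) := by
          rw [hgB]; exact ⟨hM_nonneg, le_of_lt hg0⟩
        obtain ⟨c, hcmem, hgc⟩ := hsub hMmem
        exact ⟨c, hcmem.1, le_of_eq hgc, Or.inr hgc⟩
    obtain ⟨c, hc, hDle, hcase⟩ := hchoice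
    have hkey := waterfill_key n w z0 c hw_anti hw_nonneg hw_zero hc hH1 hH2
      (by rw [hgdef] at hDle; exact hDle)
      (by rcases hcase with h | h
          · exact Or.inl h
          · exact Or.inr (by rw [hgdef] at h; exact h))
    -- the inner tournament
    set bseq : ℕ → ℝ := fun j => min 1 (max 0 (w j - c)) with hbseqdef
    set v : Fin n → ℝ := fun j => w (j : ℕ) - bseq (j : ℕ) with hvdef
    have hv_eq : ∀ j : Fin n, v j = max (w (j:ℕ) - 1) (min (w (j:ℕ)) c) :=
      fun j => clamp_sub_eq _ c (hw_nonneg _)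
    have hv_anti : Antitone v := by
      intro i j hij
      rw [hv_eq, hv_eq]
      have hw : w (j:ℕ) ≤ w (i:ℕ) := hw_anti (by exact_mod_cast hij)
      exact max_le_max (by linarith) (min_le_min (by linarith) le_rfl)
    have hv_nonneg : ∀ j, 0 ≤ v j := by
      intro j
      rw [hv_eq]
      exact le_trans (le_min (hw_nonneg _) hc) (le_max_right _ _)
    have hv_prefix : ∀ k, k ≤ n → ∑ j ∈ range k, zext n v j ≤ FB n k := by
      intro k hk
      have h1 : ∑ j ∈ range k, zext n v j = ∑ j ∈ range k, (w j - bseq j) := by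
        refine Finset.sum_congr rfl (fun j hj => ?_)
        have hjk : j < n := lt_of_lt_of_le (mem_range.1 hj) hk
        rw [zext_lt v hjk]
      rw [h1]
      exact hkey k hk
    have hinner := IH v hv_anti hv_nonneg hv_prefix
    obtain ⟨pm', pp', ph', g1, g2, g3, g4, g5, g6⟩ := hinner
    -- data for the peeled vertex
    set bF : Fin n → ℝ := fun j => bseq (j:ℕ) with hbFdef
    set D : ℝ := ∑ j ∈ range n, bseq j with hDdef
    set A : ℝ := (n:ℝ) - D with hAdef
    set h0 : ℝ := min (1/2) z0 with hh0def
    set R : ℝ := z0 - h0 with hRdef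
    set lam : ℝ := if A = 0 then 0 else R / A with hlamdef
    set aF : Fin n → ℝ := fun j => lam * (1 - bF j) with haFdef
    have hb01 : ∀ j : Fin n, 0 ≤ bF j ∧ bF j ≤ 1 := by
      intro j
      constructor
      · exact le_min (by norm_num) (le_max_left 0 _)
      · exact min_le_left _ _
    have hDM : D ≤ M := by rw [hDdef]; rw [hgdef] at hDle; exact hDle
    have hsumbF : ∑ j : Fin n, bF j = D := by
      rw [hDdef]
      exact Fin.sum_univ_eq_sum_range (fun j => bseq j) n
    have hD_le_n : D ≤ (n:ℝ) := by
      rw [hDdef]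
      calc ∑ j ∈ range n, bseq j ≤ ∑ j ∈ range n, 1 :=
            Finset.sum_le_sum (fun j _ => min_le_left _ _)
        _ = (n:ℝ) := by simp
    have hD_nonneg : 0 ≤ D := by
      rw [hDdef]
      exact Finset.sum_nonneg (fun j _ => le_min (by norm_num) (le_max_left 0 _))
    have hA_nonneg : 0 ≤ A := by rw [hAdef]; linarith
    have hh0_nonneg : 0 ≤ h0 := le_min (by norm_num) (hz_nonneg 0)
    have hh0_le : h0 ≤ 1/2 := min_le_left _ _
    have hR_nonneg : 0 ≤ R := by
      rw [hRdef, hh0def]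
      have := min_le_right (1/2 : ℝ) z0
      linarith
    have hR_le_A : R ≤ A := by
      rcases le_total (1/2 : ℝ) z0 with h | h
      · have : h0 = 1/2 := min_eq_left h
        rw [hRdef, hAdef, this]
        rw [hMdef] at hDM
        linarith
      · have : h0 = z0 := min_eq_right h
        rw [hRdef, this]
        linarith
    have hlam01 : 0 ≤ lam ∧ lam ≤ 1 := by
      rw [hlamdef]
      split
      · norm_num
      · rename_i hA0
        have hApos : 0 < A := lt_of_le_of_ne hA_nonneg (Ne.symm hA0)
        constructor
        · positivity
        · rw [div_le_one hApos]; exact hR_le_A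
    have ha01 : ∀ j : Fin n, 0 ≤ aF j ∧ aF j ≤ 1 - bF j := by
      intro j
      have hb := hb01 j
      constructor
      · apply mul_nonneg hlam01.1; linarith
      · calc aF j = lam * (1 - bF j) := rfl
          _ ≤ 1 * (1 - bF j) := mul_le_mul_of_nonneg_right hlam01.2 (by linarith)
          _ = 1 - bF j := one_mul _
    have hsum_aF : ∑ j : Fin n, aF j = R := by
      have h1 : ∑ j : Fin n, aF j = lam * A := by
        rw [haFdef]
        rw [← Finset.mul_sum]
        congr 1
        rw [Finset.sum_sub_distrib, hsumbF, hAdef]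
        simp
      rw [h1, hlamdef]
      split
      · rename_i hA0
        rw [hA0, mul_zero]
        have : R ≤ 0 := hA0 ▸ hR_le_A
        linarith
      · rename_i hA0
        field_simp
    have hz_succ : ∀ i : Fin n, z i.succ = v i + bF i := by
      intro i
      have h1 : w (i:ℕ) = z i.succ := by
        show zext (n+1) z ((i:ℕ)+1) = z i.succ
        rw [zext_lt z (by omega : (i:ℕ)+1 < n+1)]
        exact congrArg z (Fin.ext rfl)
      show z i.succ = (w (i:ℕ) - bF i) + bF i
      rw [h1]
      ring
    -- assemble
    refine ⟨Fin.cons (Fin.cons (1/2) (fun j => (1 + aF j - bF j)/2))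
        (fun i => Fin.cons ((1 + bF i - aF i)/2) (fun j => pm' i j)),
      Fin.cons (Fin.cons (1/2) (fun j => (1 + aF j + bF j)/2))
        (fun i => Fin.cons ((1 + aF i + bF i)/2) (fun j => pp' i j)),
      Fin.cons (h0 + 1/2) ph', ?_, ?_, ?_, ?_, ?_, ?_⟩
    · -- pm bounds
      intro i j
      induction i using Fin.cases with
      | zero =>
        induction j using Fin.cases with
        | zero => simp; norm_num
        | succ j =>
          simp only [Fin.cons_zero, Fin.cons_succ]
          have := ha01 j; have := hb01 j
          constructor <;> [linarith; linarith]
      | succ i =>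
        induction j using Fin.cases with
        | zero =>
          simp only [Fin.cons_zero, Fin.cons_succ]
          have := ha01 i; have := hb01 i
          constructor <;> [linarith; linarith]
        | succ j =>
          simp only [Fin.cons_succ]
          exact g1 i j
    · -- pm antisymmetry
      intro i j hij
      induction i using Fin.cases with
      | zero =>
        induction j using Fin.cases with
        | zero => exact absurd rfl hij
        | succ j => simp only [Fin.cons_zero, Fin.cons_succ]; ring
      | succ i =>
        induction j using Fin.cases with
        | zero => simp only [Fin.cons_zero, Fin.cons_succ]; ring
        | succ j =>
          simp only [Fin.cons_succ]
          exact g2 i j (fun h => hij (congrArg Fin.succ h))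
    · -- pp bounds
      intro i j
      induction i using Fin.cases with
      | zero =>
        induction j using Fin.cases with
        | zero => simp; norm_num
        | succ j =>
          simp only [Fin.cons_zero, Fin.cons_succ]
          have := ha01 j; have := hb01 j
          constructor <;> [linarith; linarith]
      | succ i =>
        induction j using Fin.cases with
        | zero =>
          simp only [Fin.cons_zero, Fin.cons_succ]
          have := ha01 i; have := hb01 i
          constructor <;> [linarith; linarith]
        | succ j =>
          simp only [Fin.cons_succ]
          exact g3 i j
    · -- pp symmetry
      intro i j
      induction i using Fin.cases with
      | zero =>
        induction j using Fin.cases with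
        | zero => rfl
        | succ j => simp only [Fin.cons_zero, Fin.cons_succ]
      | succ i =>
        induction j using Fin.cases with
        | zero => simp only [Fin.cons_zero, Fin.cons_succ]
        | succ j =>
          simp only [Fin.cons_succ]
          exact g4 i j
    · -- ph bounds
      intro i
      induction i using Fin.cases with
      | zero =>
        simp only [Fin.cons_zero]
        constructor <;> linarith
      | succ i =>
        simp only [Fin.cons_succ]
        exact g5 i
    · -- the scores
      intro i
      induction i using Fin.cases with
      | zero =>
        rw [Finset.sum_erase_eq_sub (mem_univ 0), Finset.sum_erase_eq_sub (mem_univ 0)]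
        simp only [Fin.cons_zero]
        rw [Fin.sum_univ_succ, Fin.sum_univ_succ]
        simp only [Fin.cons_zero, Fin.cons_succ]
        have e1 : ∑ j : Fin n, ((1 + aF j - bF j)/2 - 1/2) = ∑ j : Fin n, (aF j - bF j)/2 :=
          Finset.sum_congr rfl (fun j _ => by ring)
        have e2 : ∑ j : Fin n, ((1 + aF j + bF j)/2 - 1/2) = ∑ j : Fin n, (aF j + bF j)/2 :=
          Finset.sum_congr rfl (fun j _ => by ring)
        rw [e1, e2]
        have e3 : ∑ j : Fin n, (aF j - bF j)/2 + ∑ j : Fin n, (aF j + bF j)/2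
            = ∑ j : Fin n, aF j := by
          rw [← Finset.sum_add_distrib]
          exact Finset.sum_congr rfl (fun j _ => by ring)
        have hz0eq : z 0 = R + h0 := by rw [hRdef]; ring
        rw [hz0eq, ← hsum_aF]
        linarith [e3]
      | succ i =>
        rw [Finset.sum_erase_eq_sub (mem_univ i.succ), Finset.sum_erase_eq_sub (mem_univ i.succ)]
        simp only [Fin.cons_succ]
        rw [Fin.sum_univ_succ, Fin.sum_univ_succ]
        simp only [Fin.cons_zero, Fin.cons_succ]
        have hscore := g6 i
        rw [Finset.sum_erase_eq_sub (mem_univ i), Finset.sum_erase_eq_sub (mem_univ i)] at hscore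
        rw [hz_succ i]
        linarith [hscore]

lemma card_filter_val_lt (n k : ℕ) (hk : k ≤ n) :
    (univ.filter (fun i : Fin n => (i : ℕ) < k)).card = k := by
  classical
  have hinj : Function.Injective (fun i : Fin k => (⟨(i:ℕ), lt_of_lt_of_le i.isLt hk⟩ : Fin n)) :=
    fun a b hab => Fin.ext (by simpa using congrArg Fin.val hab)
  have : univ.filter (fun i : Fin n => (i : ℕ) < k)
      = Finset.map ⟨_, hinj⟩ univ := by
    ext a
    simp only [mem_filter, mem_univ, true_and, Finset.mem_map, Function.Embedding.coeFn_mk]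
    constructor
    · intro ha
      exact ⟨⟨(a:ℕ), ha⟩, Fin.ext rfl⟩
    · rintro ⟨i, _, rfl⟩
      exact i.isLt
  rw [this, Finset.card_map, card_univ, Fintype.card_fin]

/-- subset-sum hypothesis implies mean score sequence (unsorted version). -/
lemma score_core (n : ℕ) (y : Fin n → ℝ) (hy0 : ∀ i, 0 ≤ y i)
    (hsub : ∀ S : Finset (Fin n), ∑ i ∈ S, y i ≤ FB n S.card) : IsMeanScoreSeqB n y := by
  classical
  set σ := Tuple.sort (fun i => -(y i)) with hσ
  have hmono : Monotone ((fun i => -(y i)) ∘ σ) := Tuple.monotone_sort _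
  set z : Fin n → ℝ := y ∘ σ with hzdef
  have hz_anti : Antitone z := by
    intro a b hab
    have := hmono hab
    simp only [Function.comp] at this
    simpa [hzdef] using neg_le_neg_iff.1 (by simpa using this)
  have hz_nonneg : ∀ i, 0 ≤ z i := fun i => hy0 _
  have hz_prefix : ∀ k, k ≤ n → ∑ j ∈ range k, zext n z j ≤ FB n k := by
    intro k hk
    rw [sum_zext_prefix z hk]
    set Sk := univ.filter (fun i : Fin n => (i : ℕ) < k) with hSk
    have h1 : ∑ i ∈ Sk, z i = ∑ j ∈ Sk.image σ, y j := by
      rw [Finset.sum_image (fun a _ b _ h => σ.injective h)]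
      rfl
    have h2 : (Sk.image σ).card = k := by
      rw [Finset.card_image_of_injective _ σ.injective, hSk, card_filter_val_lt n k hk]
    rw [h1]
    calc ∑ j ∈ Sk.image σ, y j ≤ FB n (Sk.image σ).card := hsub _
      _ = FB n k := by rw [h2]
  have hz := score_aux n z hz_anti hz_nonneg hz_prefix
  have hy := hz.perm σ⁻¹
  have : z ∘ ⇑σ⁻¹ = y := by
    funext i
    show y (σ (σ⁻¹ i)) = y i
    exact congrArg y (σ.apply_symm_apply i)
  rwa [this] at hy

lemma sum_range_id_real (k : ℕ) : ∑ j ∈ range k, (j:ℝ) = k*((k:ℝ)-1)/2 := by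
  induction k with
  | zero => simp
  | succ k ih =>
    rw [Finset.sum_range_succ, ih]
    push_cast
    ring

/-- sum of `ρ` over the top `k` indices equals `FB n k`. -/
lemma rho_top (n k : ℕ) (hk : k ≤ n) :
    ∃ T : Finset (Fin n), T.card = k ∧ ∑ j ∈ T, ((j:ℝ) + 1/2) = FB n k := by
  classical
  have hinj : Function.Injective (fun i : Fin k => (⟨n - k + (i:ℕ), by omega⟩ : Fin n)) :=
    fun a b hab => Fin.ext (by
      have := congrArg Fin.val hab
      simp only [] at this
      omega)
  refine ⟨Finset.map ⟨_, hinj⟩ univ, by simp, ?_⟩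
  rw [Finset.sum_map]
  have h1 : ∑ x : Fin k,
      ((((⟨fun i => (⟨n - k + (i:ℕ), by omega⟩ : Fin n), hinj⟩ : Fin k ↪ Fin n) x : Fin n) : ℕ) : ℝ)
        + 1/2 * k
      = ∑ i : Fin k, (((n:ℝ) - k + (i:ℕ)) + 1/2) := by
    rw [Finset.sum_add_distrib, Finset.sum_const]
    congr 1
    · refine Finset.sum_congr rfl (fun i _ => ?_)
      show ((n - k + (i:ℕ) : ℕ) : ℝ) = (n:ℝ) - k + (i:ℕ)
      rw [Nat.cast_add, Nat.cast_sub hk]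
    · simp [card_univ]
      ring
  have h0 : ∑ x : Fin k,
      (((((⟨fun i => (⟨n - k + (i:ℕ), by omega⟩ : Fin n), hinj⟩ : Fin k ↪ Fin n) x : Fin n) : ℕ) : ℝ)
        + 1/2)
      = ∑ x : Fin k,
      ((((⟨fun i => (⟨n - k + (i:ℕ), by omega⟩ : Fin n), hinj⟩ : Fin k ↪ Fin n) x : Fin n) : ℕ) : ℝ)
        + 1/2 * k := by
    rw [Finset.sum_add_distrib, Finset.sum_const]
    simp [card_univ]
    ring
  rw [h0, h1]
  have h2 : ∑ i : Fin k, (((n:ℝ) - k + (i:ℕ)) + 1/2)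
      = ∑ i ∈ range k, (((n:ℝ) - k + (i:ℕ)) + 1/2) :=
    Fin.sum_univ_eq_sum_range (fun i => ((n:ℝ) - k + (i:ℕ)) + 1/2) k
  rw [h2, Finset.sum_add_distrib, Finset.sum_add_distrib, sum_range_id_real,
    Finset.sum_const, Finset.sum_const, Finset.card_range]
  unfold FB
  push_cast [nsmul_eq_mul]
  ring

/-- sum of `ρ` over any subset is at most `FB n card`. -/
lemma sum_rho_le {n : ℕ} (T : Finset (Fin n)) :
    ∑ j ∈ T, ((j:ℝ) + 1/2) ≤ FB n T.card := by
  classical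
  have hk : T.card ≤ n := by simpa using Finset.card_le_card (Finset.subset_univ T)
  set k := T.card with hkdef
  set e := T.orderEmbOfFin rfl with he
  have hlt : ∀ i : Fin k, ((e i : Fin n) : ℕ) < n := fun i => (e i).isLt
  have hmono : StrictMono (fun i : Fin k => ((e i : Fin n) : ℕ)) := by
    intro a b hab
    exact_mod_cast (OrderEmbedding.lt_iff_lt e).2 hab
  -- reversed embedding gives the upper bound  e i ≤ n - k + i
  have hub : ∀ i : Fin k, ((e i : Fin n) : ℕ) ≤ n - k + (i:ℕ) := by
    intro i
    have hrev : StrictMono (fun j : Fin k => (n - 1) - ((e (Fin.rev j) : Fin n) : ℕ)) := by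
      intro a b hab
      have h1 : Fin.rev b < Fin.rev a := Fin.rev_lt_rev.2 hab
      have h2 := hmono h1
      have h3 := hlt (Fin.rev a)
      have h4 := hlt (Fin.rev b)
      simp only [] at h2 ⊢
      omega
    have := strictMono_fin_nat_le hrev (Fin.rev i)
    have hri : ((Fin.rev i : Fin k) : ℕ) = k - 1 - (i:ℕ) := by
      simp [Fin.rev]
      omega
    rw [hri] at this
    have h5 := hlt (Fin.rev (Fin.rev i))
    rw [Fin.rev_rev] at this
    have h6 : (i:ℕ) < k := i.isLt
    omega
  have himg := image_eq_of_range T (fun i => e i) e.injective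
    (fun i => T.orderEmbOfFin_mem rfl i) rfl
  have h1 : ∑ j ∈ T, ((j:ℝ) + 1/2) = ∑ i : Fin k, (((e i : Fin n) : ℕ) : ℝ) + 1/2 * k := by
    have hsi := Finset.sum_image (s := univ) (g := fun i : Fin k => e i)
      (f := fun j : Fin n => ((j:ℝ) + 1/2)) (fun a _ b _ h => e.injective h)
    rw [himg] at hsi
    rw [hsi, Finset.sum_add_distrib, Finset.sum_const]
    simp [card_univ]
    ring
  rw [h1]
  have h2 : ∑ i : Fin k, (((e i : Fin n) : ℕ) : ℝ) ≤ ∑ i : Fin k, ((n:ℝ) - k + (i:ℕ)) := by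
    apply Finset.sum_le_sum
    intro i _
    have := hub i
    have hcast : (((e i : Fin n) : ℕ) : ℝ) ≤ ((n - k + (i:ℕ) : ℕ) : ℝ) := by exact_mod_cast this
    have : ((n - k + (i:ℕ) : ℕ) : ℝ) = (n:ℝ) - k + (i:ℕ) := by
      rw [Nat.cast_add, Nat.cast_sub hk]
    linarith
  have h3 : ∑ i : Fin k, ((n:ℝ) - k + (i:ℕ)) = k * ((n:ℝ) - k) + k*((k:ℝ)-1)/2 := by
    rw [Fin.sum_univ_eq_sum_range (fun i => ((n:ℝ) - k + (i:ℕ))) k,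
      Finset.sum_add_distrib, sum_range_id_real, Finset.sum_const, Finset.card_range]
    simp [nsmul_eq_mul]
  have : FB n k = k * ((n:ℝ) - k) + k*((k:ℝ)-1)/2 + 1/2 * k := by
    unfold FB; ring
  linarith

lemma forward_bound {n : ℕ} {x : Fin n → ℝ} (h : IsMeanScoreSeqB n x) (S : Finset (Fin n)) :
    ∑ i ∈ S, |x i| ≤ FB n S.card := by
  classical
  obtain ⟨pm, pp, ph, h1, h2, h3, h4, h5, h6⟩ := h
  have hk : S.card ≤ n := by simpa using Finset.card_le_card (Finset.subset_univ S)
  set k := S.card with hkdef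
  set ε : Fin n → ℝ := fun i => if 0 ≤ x i then 1 else -1 with hεdef
  have hε1 : ∀ i, ε i = 1 ∨ ε i = -1 := by
    intro i
    simp only [hεdef]
    by_cases h : 0 ≤ x i
    · exact Or.inl (if_pos h)
    · exact Or.inr (if_neg h)
  have habs : ∀ i, |x i| = ε i * x i := by
    intro i
    simp only [hεdef]
    by_cases h : 0 ≤ x i
    · rw [if_pos h, abs_of_nonneg h, one_mul]
    · rw [if_neg h, abs_of_neg (lt_of_not_ge h)]
      ring
  set Gm : Fin n → Fin n → ℝ := fun i j => if i = j then 0 else pm i j - 1/2 with hGmdef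
  set Gp : Fin n → Fin n → ℝ := fun i j => if i = j then 0 else pp i j - 1/2 with hGpdef
  have hGm_diag : ∀ i, Gm i i = 0 := fun i => if_pos rfl
  have hGp_diag : ∀ i, Gp i i = 0 := fun i => if_pos rfl
  have hGm_bound : ∀ i j, -(1/2) ≤ Gm i j ∧ Gm i j ≤ 1/2 := by
    intro i j
    simp only [hGmdef]
    by_cases hij : i = j
    · rw [if_pos hij]; norm_num
    · rw [if_neg hij]
      have := h1 i j
      constructor <;> linarith [this.1, this.2]
  have hGp_bound : ∀ i j, -(1/2) ≤ Gp i j ∧ Gp i j ≤ 1/2 := by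
    intro i j
    simp only [hGpdef]
    by_cases hij : i = j
    · rw [if_pos hij]; norm_num
    · rw [if_neg hij]
      have := h3 i j
      constructor <;> linarith [this.1, this.2]
  have hGm_skew : ∀ i j, Gm j i = -(Gm i j) := by
    intro i j
    simp only [hGmdef]
    by_cases hij : i = j
    · subst hij; simp
    · rw [if_neg (Ne.symm hij), if_neg hij]
      have := h2 i j hij
      linarith
  have hGp_symm : ∀ i j, Gp j i = Gp i j := by
    intro i j
    simp only [hGpdef]
    by_cases hij : i = j
    · subst hij; rfl
    · rw [if_neg (Ne.symm hij), if_neg hij, h4 i j]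
  have hx : ∀ i, x i = (∑ j, Gm i j) + (∑ j, Gp i j) + (ph i - 1/2) := by
    intro i
    have e1 : ∑ j ∈ univ.erase i, (pm i j - 1/2) = ∑ j, Gm i j := by
      rw [Finset.sum_congr rfl (fun j hj => show pm i j - 1/2 = Gm i j from
        (if_neg (Ne.symm (mem_erase.1 hj).1)).symm)]
      exact Finset.sum_erase univ (hGm_diag i)
    have e2 : ∑ j ∈ univ.erase i, (pp i j - 1/2) = ∑ j, Gp i j := by
      rw [Finset.sum_congr rfl (fun j hj => show pp i j - 1/2 = Gp i j from
        (if_neg (Ne.symm (mem_erase.1 hj).1)).symm)]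
      exact Finset.sum_erase univ (hGp_diag i)
    rw [h6 i, e1, e2]
  have hmain : ∑ i ∈ S, |x i|
      = (∑ i ∈ S, ∑ j ∈ S, (ε i * Gm i j + ε i * Gp i j))
        + ((∑ i ∈ S, ∑ j ∈ Sᶜ, (ε i * Gm i j + ε i * Gp i j))
          + ∑ i ∈ S, ε i * (ph i - 1/2)) := by
    rw [← Finset.sum_add_distrib, ← Finset.sum_add_distrib]
    refine Finset.sum_congr rfl (fun i _ => ?_)
    rw [habs i]
    have c1 : ∑ j ∈ S, (ε i * Gm i j + ε i * Gp i j)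
        = ε i * ∑ j ∈ S, Gm i j + ε i * ∑ j ∈ S, Gp i j := by
      rw [Finset.sum_add_distrib, Finset.mul_sum, Finset.mul_sum]
    have c2 : ∑ j ∈ Sᶜ, (ε i * Gm i j + ε i * Gp i j)
        = ε i * ∑ j ∈ Sᶜ, Gm i j + ε i * ∑ j ∈ Sᶜ, Gp i j := by
      rw [Finset.sum_add_distrib, Finset.mul_sum, Finset.mul_sum]
    have c3 : ∑ j ∈ S, Gm i j + ∑ j ∈ Sᶜ, Gm i j = ∑ j, Gm i j :=
      Finset.sum_add_sum_compl S _
    have c4 : ∑ j ∈ S, Gp i j + ∑ j ∈ Sᶜ, Gp i j = ∑ j, Gp i j :=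
      Finset.sum_add_sum_compl S _
    rw [c1, c2, hx i, ← c3, ← c4]
    ring
  -- bound the within-S part
  have hterm : ∀ i j : Fin n, (ε i - ε j) * Gm i j + (ε i + ε j) * Gp i j
      ≤ (if i = j then 0 else 1) := by
    intro i j
    by_cases hij : i = j
    · subst hij
      rw [if_pos rfl, hGm_diag, hGp_diag]
      simp
    · rw [if_neg hij]
      rcases hε1 i with hi | hi <;> rcases hε1 j with hj | hj <;>
        rw [hi, hj] <;>
        nlinarith [(hGm_bound i j).1, (hGm_bound i j).2, (hGp_bound i j).1, (hGp_bound i j).2]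
  have hdouble : (∑ i ∈ S, ∑ j ∈ S, (ε i * Gm i j + ε i * Gp i j)) * 2
      = ∑ i ∈ S, ∑ j ∈ S, ((ε i - ε j) * Gm i j + (ε i + ε j) * Gp i j) := by
    have hcomm : (∑ i ∈ S, ∑ j ∈ S, (ε i * Gm i j + ε i * Gp i j))
        = ∑ i ∈ S, ∑ j ∈ S, (ε j * Gm j i + ε j * Gp j i) := Finset.sum_comm
    rw [mul_two]
    nth_rewrite 2 [hcomm]
    rw [← Finset.sum_add_distrib]
    refine Finset.sum_congr rfl (fun i _ => ?_)
    rw [← Finset.sum_add_distrib]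
    refine Finset.sum_congr rfl (fun j _ => ?_)
    rw [hGm_skew i j, hGp_symm i j]
    ring
  have hinner : ∀ i ∈ S, ∑ j ∈ S, (if i = j then (0:ℝ) else 1) = (k:ℝ) - 1 := by
    intro i hi
    have : ∀ j ∈ S, (if i = j then (0:ℝ) else 1) = 1 - (if i = j then 1 else 0) := by
      intro j _
      split <;> ring
    rw [Finset.sum_congr rfl this, Finset.sum_sub_distrib, Finset.sum_const,
      Finset.sum_ite_eq S i (fun _ => (1:ℝ)), if_pos hi, nsmul_eq_mul, mul_one]
  have hT1 : (∑ i ∈ S, ∑ j ∈ S, (ε i * Gm i j + ε i * Gp i j)) ≤ (k:ℝ) * ((k:ℝ)-1) / 2 := by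
    have hR : ∑ i ∈ S, ∑ j ∈ S, ((ε i - ε j) * Gm i j + (ε i + ε j) * Gp i j)
        ≤ ∑ i ∈ S, ((k:ℝ) - 1) := by
      refine Finset.sum_le_sum (fun i hi => ?_)
      calc ∑ j ∈ S, ((ε i - ε j) * Gm i j + (ε i + ε j) * Gp i j)
          ≤ ∑ j ∈ S, (if i = j then (0:ℝ) else 1) :=
            Finset.sum_le_sum (fun j _ => hterm i j)
        _ = (k:ℝ) - 1 := hinner i hi
    rw [Finset.sum_const, nsmul_eq_mul, ← hkdef] at hR
    have := hdouble
    linarith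
  -- bound the cross part
  have hT2 : (∑ i ∈ S, ∑ j ∈ Sᶜ, (ε i * Gm i j + ε i * Gp i j)) ≤ (k:ℝ) * ((n:ℝ) - k) := by
    have hcross : ∀ i ∈ S, ∀ j ∈ Sᶜ, ε i * Gm i j + ε i * Gp i j ≤ 1 := by
      intro i hi j hj
      rcases hε1 i with hie | hie <;> rw [hie] <;>
        nlinarith [(hGm_bound i j).1, (hGm_bound i j).2, (hGp_bound i j).1, (hGp_bound i j).2]
    calc ∑ i ∈ S, ∑ j ∈ Sᶜ, (ε i * Gm i j + ε i * Gp i j)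
        ≤ ∑ i ∈ S, ∑ j ∈ Sᶜ, (1:ℝ) := by
          refine Finset.sum_le_sum (fun i hi => Finset.sum_le_sum (fun j hj => hcross i hi j hj))
      _ = (k:ℝ) * ((n:ℝ) - k) := by
          rw [Finset.sum_const, Finset.sum_const, Finset.card_compl, nsmul_eq_mul, nsmul_eq_mul,
            mul_one, Fintype.card_fin, Nat.cast_sub hk, ← hkdef]
  have hT3 : (∑ i ∈ S, ε i * (ph i - 1/2)) ≤ (k:ℝ) * (1/2) := by
    calc ∑ i ∈ S, ε i * (ph i - 1/2) ≤ ∑ i ∈ S, (1/2 : ℝ) := by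
          refine Finset.sum_le_sum (fun i _ => ?_)
          rcases hε1 i with hie | hie <;> rw [hie] <;> nlinarith [(h5 i).1, (h5 i).2]
      _ = (k:ℝ) * (1/2) := by rw [Finset.sum_const, nsmul_eq_mul, ← hkdef]
  have hFB : FB n k = (k:ℝ)*((k:ℝ)-1)/2 + (k:ℝ)*((n:ℝ)-(k:ℝ)) + (k:ℝ)*(1/2) := by
    unfold FB; ring
  rw [hmain, hFB]
  linarith



theorem meanScoreSeqB_iff_weakSubMaj (n : ℕ) (x : Fin n → ℝ) :
    IsMeanScoreSeqB n x ↔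
      WeakSubMaj (fun i => |x i|) (fun i : Fin n => (i : ℝ) + 1/2) := by
  constructor
  · intro h S
    have hk : S.card ≤ n := by simpa using Finset.card_le_card (Finset.subset_univ S)
    obtain ⟨T, hTcard, hTsum⟩ := rho_top n S.card hk
    exact ⟨T, hTcard, by rw [hTsum]; exact forward_bound h S⟩
  · intro hw
    have hsub : ∀ S : Finset (Fin n), ∑ i ∈ S, |x i| ≤ FB n S.card := by
      intro S
      obtain ⟨T, hTcard, hle⟩ := hw S
      calc ∑ i ∈ S, |x i| ≤ ∑ j ∈ T, ((j:ℝ) + 1/2) := hle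
        _ ≤ FB n T.card := sum_rho_le T
        _ = FB n S.card := by rw [hTcard]
    have hy := score_core n (fun i => |x i|) (fun i => abs_nonneg _) hsub
    have hflip := hy.signflip (fun i => decide (x i < 0))
    have hxeq : (fun i => if (decide (x i < 0)) then -((fun i => |x i|) i) else (fun i => |x i|) i)
        = x := by
      funext i
      by_cases hxi : x i < 0
      · rw [decide_eq_true hxi, if_pos rfl]
        show -(|x i|) = x i
        rw [abs_of_neg hxi]
        ring
      · rw [decide_eq_false hxi, if_neg (by simp)]
        exact abs_of_nonneg (le_of_not_gt hxi)
    rwa [hxeq] at hflip
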